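/- Let H and K₀ be real separable Hilbert spaces, A a positive bounded operator on H, V : K₀ → H an isometry (V^*V = I), μ > 0, and h_μ(A) := V (V^* A V + μ I)^{-1} V^*. Then for all u, v ∈ [0, 1/2], ‖(A + μI)^u h_μ(A) (A + μI)^v‖ ≤ μ^{-1 + u + v}. -/

import Mathlib

open ContinuousLinearMap

/-- `S` is the positive square root of the positive operator `T`. -/
def IsSqrtOf {E : Type*} [NormedAddCommGroup E] [InnerProductSpace ℝ E]
    [CompleteSpace E] (S T : E →L[ℝ] E) : Prop :=
  S.IsPositive ∧ S ∘L S = T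

/-- `S` is the inverse `T⁻¹` of the operator `T`. -/
def IsInvOf {E : Type*} [NormedAddCommGroup E] [InnerProductSpace ℝ E]
    [CompleteSpace E] (S T : E →L[ℝ] E) : Prop :=
  S ∘L T = 1 ∧ T ∘L S = 1

/-- `S` is the inverse square root `T^{-1/2}` of the positive invertible operator `T`,
i.e. `S` is positive and `S ∘ S = T⁻¹`. -/
def IsInvSqrtOf {E : Type*} [NormedAddCommGroup E] [InnerProductSpace ℝ E]
    [CompleteSpace E] (S T : E →L[ℝ] E) : Prop :=
  S.IsPositive ∧ IsInvOf (S ∘L S) T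

/-- `p` is the family of real powers `t ↦ A ^ t` (for `t ≥ 0`) of the positive operator `A`,
given by the continuous functional calculus; it is characterized by the semigroup property
together with positivity, continuity, `p 0 = 1` and `p 1 = A`. -/
def IsPowerFamilyOf {E : Type*} [NormedAddCommGroup E] [InnerProductSpace ℝ E]
    [CompleteSpace E] (A : E →L[ℝ] E) (p : ℝ → E →L[ℝ] E) : Prop :=
  p 0 = 1 ∧ p 1 = A ∧ (∀ s t : ℝ, 0 ≤ s → 0 ≤ t → p (s + t) = p s ∘L p t) ∧
    (∀ t : ℝ, 0 ≤ t → (p t).IsPositive) ∧ ContinuousOn p (Set.Ici (0 : ℝ))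

local notation "⟪" x ", " y "⟫" => @inner ℝ _ _ x y

/-- Max principle for midpoint-convex continuous functions vanishing at `0` and `1`. -/
lemma aux_max {φ : ℝ → ℝ} (hφc : ContinuousOn φ (Set.Icc 0 1))
    (h0 : φ 0 = 0) (h1 : φ 1 = 0)
    (hmidφ : ∀ a ∈ Set.Icc (0:ℝ) 1, ∀ b ∈ Set.Icc (0:ℝ) 1, φ ((a+b)/2) ≤ (φ a + φ b)/2)
    {t : ℝ} (ht : t ∈ Set.Icc (0:ℝ) 1) : φ t ≤ 0 := by
  obtain ⟨c, hc, hmax⟩ := (isCompact_Icc).exists_isMaxOn (Set.nonempty_Icc.2 zero_le_one) hφc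
  have hmax' : ∀ x ∈ Set.Icc (0:ℝ) 1, φ x ≤ φ c := fun x hx => hmax hx
  have hMle : φ c ≤ 0 := by
    rcases le_total c (1 - c) with h | h
    · have hb : 2*c ∈ Set.Icc (0:ℝ) 1 := ⟨by linarith [hc.1], by linarith⟩
      have h4 := hmidφ 0 (by constructor <;> norm_num) (2*c) hb
      have h5 : ((0:ℝ)+2*c)/2 = c := by ring
      rw [h5, h0] at h4
      have h6 := hmax' (2*c) hb
      linarith
    · have hb : 2*c-1 ∈ Set.Icc (0:ℝ) 1 := ⟨by linarith, by linarith [hc.2]⟩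
      have h4 := hmidφ (2*c-1) hb 1 (by constructor <;> norm_num)
      have h5 : ((2*c-1)+1)/2 = c := by ring
      rw [h5, h1] at h4
      have h6 := hmax' (2*c-1) hb
      linarith
  exact le_trans (hmax' t ht) hMle

/-- A continuous midpoint-convex function on `[0,1]` lies below its chord. -/
lemma aux_midpoint_chord {g : ℝ → ℝ} (hg : ContinuousOn g (Set.Icc 0 1))
    (hmid : ∀ a ∈ Set.Icc (0:ℝ) 1, ∀ b ∈ Set.Icc (0:ℝ) 1, g ((a+b)/2) ≤ (g a + g b)/2)
    {t : ℝ} (ht : t ∈ Set.Icc (0:ℝ) 1) : g t ≤ (1-t) * g 0 + t * g 1 := by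
  have h := aux_max (φ := fun s => g s - ((1-s) * g 0 + s * g 1))
    (hg.sub (Continuous.continuousOn (by continuity)))
    (by simp) (by simp)
    (fun a ha b hb => by
      have h2 : (1-(a+b)/2) * g 0 + ((a+b)/2) * g 1
          = (((1-a)*g 0 + a*g 1) + ((1-b)*g 0 + b*g 1))/2 := by ring
      have h3 := hmid a ha b hb
      linarith) ht
  linarith

lemma aux_sa_inner {E : Type*} [NormedAddCommGroup E] [InnerProductSpace ℝ E] [CompleteSpace E]
    {T : E →L[ℝ] E} (hT : IsSelfAdjoint T) (x y : E) : ⟪T x, y⟫ = ⟪x, T y⟫ := by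
  conv_lhs => rw [← hT.adjoint_eq]
  exact ContinuousLinearMap.adjoint_inner_left T y x

set_option maxHeartbeats 2000000 in
/-- For a positive operator `A` on `H`, an isometry `V : K₀ → H`, `mu > 0`,
`h_mu(A) := V (V^* A V + mu I)⁻¹ V^*` and exponents `u, v ∈ [0, 1/2]`, one has
`‖(A + mu I)^u h_mu(A) (A + mu I)^v‖ ≤ mu^{-1+u+v}`. -/
theorem stmt7 {H K₀ : Type*}
    [NormedAddCommGroup H] [InnerProductSpace ℝ H] [CompleteSpace H]
    [TopologicalSpace.SeparableSpace H]
    [NormedAddCommGroup K₀] [InnerProductSpace ℝ K₀] [CompleteSpace K₀]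
    [TopologicalSpace.SeparableSpace K₀]
    (A : H →L[ℝ] H) (hA : A.IsPositive)
    (V : K₀ →L[ℝ] H) (hV : (adjoint V) ∘L V = 1)
    (mu : ℝ) (hmu : 0 < mu)
    (Winv : K₀ →L[ℝ] K₀)
    (hWinv : IsInvOf Winv ((adjoint V) ∘L A ∘L V + mu • (1 : K₀ →L[ℝ] K₀)))
    (p : ℝ → H →L[ℝ] H) (hp : IsPowerFamilyOf (A + mu • (1 : H →L[ℝ] H)) p)
    (u v : ℝ) (hu0 : 0 ≤ u) (hu : u ≤ 1 / 2) (hv0 : 0 ≤ v) (hv : v ≤ 1 / 2) :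
    ‖p u ∘L (V ∘L Winv ∘L (adjoint V)) ∘L p v‖ ≤ mu ^ (-1 + u + v) := by
  obtain ⟨hp0, hp1, hsg, hpos, hcont⟩ := hp
  obtain ⟨hW1, hW2⟩ := hWinv
  set W : K₀ →L[ℝ] K₀ := (adjoint V) ∘L A ∘L V + mu • (1 : K₀ →L[ℝ] K₀) with hWdef
  set h : H →L[ℝ] H := V ∘L Winv ∘L (adjoint V) with hhdef
  -- pointwise versions
  have hVV : ∀ x : K₀, adjoint V (V x) = x := by
    intro x
    have := ContinuousLinearMap.ext_iff.1 hV x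
    simpa using this
  have hW1' : ∀ x : K₀, Winv (W x) = x := by
    intro x; have := ContinuousLinearMap.ext_iff.1 hW1 x; simpa using this
  have hW2' : ∀ x : K₀, W (Winv x) = x := by
    intro x; have := ContinuousLinearMap.ext_iff.1 hW2 x; simpa using this
  have hWapp : ∀ x : K₀, W x = adjoint V (A (V x)) + mu • x := by
    intro x; simp [hWdef]
  have hAsym : ∀ x y : H, ⟪A x, y⟫ = ⟪x, A y⟫ := fun x y => hA.1 x y
  have hAnn : ∀ x : H, 0 ≤ ⟪A x, x⟫ := fun x => by simpa using hA.inner_nonneg_left x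
  -- W symmetric
  have hWsym : ∀ x y : K₀, ⟪W x, y⟫ = ⟪x, W y⟫ := by
    intro x y
    rw [hWapp x, hWapp y]
    rw [inner_add_left, inner_add_right, real_inner_smul_left, real_inner_smul_right]
    congr 1
    calc ⟪adjoint V (A (V x)), y⟫ = ⟪A (V x), V y⟫ := adjoint_inner_left V y (A (V x))
      _ = ⟪V x, A (V y)⟫ := hAsym _ _
      _ = ⟪x, adjoint V (A (V y))⟫ := (adjoint_inner_right V x (A (V y))).symm
  -- Winv symmetric
  have hWinvsym : ∀ x y : K₀, ⟪Winv x, y⟫ = ⟪x, Winv y⟫ := by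
    intro x y
    calc ⟪Winv x, y⟫ = ⟪Winv x, W (Winv y)⟫ := by rw [hW2']
      _ = ⟪W (Winv x), Winv y⟫ := (hWsym _ _).symm
      _ = ⟪x, Winv y⟫ := by rw [hW2']
  -- h symmetric
  have hhapp : ∀ x : H, h x = V (Winv (adjoint V x)) := by intro x; simp [hhdef]
  have hhsym : ∀ x y : H, ⟪h x, y⟫ = ⟪x, h y⟫ := by
    intro x y
    rw [hhapp, hhapp]
    calc ⟪V (Winv (adjoint V x)), y⟫ = ⟪Winv (adjoint V x), adjoint V y⟫ :=
          (adjoint_inner_right V (Winv (adjoint V x)) y).symm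
      _ = ⟪adjoint V x, Winv (adjoint V y)⟫ := hWinvsym _ _
      _ = ⟪x, V (Winv (adjoint V y))⟫ := adjoint_inner_left V (Winv (adjoint V y)) x
  -- h B h = h pointwise, where B = p 1
  have hp1app : ∀ x : H, p 1 x = A x + mu • x := by
    intro x; rw [hp1]; simp
  have hhBh : ∀ z : H, h (p 1 (h z)) = h z := by
    intro z
    set w : K₀ := Winv (adjoint V z) with hw
    have h1 : h z = V w := by rw [hhapp]
    have h2 : p 1 (h z) = A (V w) + mu • (V w) := by rw [h1, hp1app]
    have h3 : adjoint V (p 1 (h z)) = W w := by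
      rw [h2, hWapp]
      rw [map_add, map_smul, hVV]
    rw [hhapp, h3, hW1', h1]
  -- norm facts
  have hVnorm : ∀ x : K₀, ‖V x‖ = ‖x‖ := by
    intro x
    have h1 : ⟪V x, V x⟫ = ⟪x, x⟫ := by
      rw [← adjoint_inner_right V x (V x), hVV]
    have := congrArg Real.sqrt h1
    rwa [real_inner_self_eq_norm_sq, real_inner_self_eq_norm_sq,
      Real.sqrt_sq (norm_nonneg _), Real.sqrt_sq (norm_nonneg _)] at this
  have hVadnorm : ∀ z : H, ‖adjoint V z‖ ≤ ‖z‖ := by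
    intro z
    rcases eq_or_ne (adjoint V z) 0 with h0 | h0
    · rw [h0]; simpa using norm_nonneg z
    have h1 : ‖adjoint V z‖^2 = ⟪adjoint V z, adjoint V z⟫ :=
      (real_inner_self_eq_norm_sq _).symm
    have h2 : ⟪adjoint V z, adjoint V z⟫ = ⟪z, V (adjoint V z)⟫ :=
      adjoint_inner_left V (adjoint V z) z
    have h3 : ⟪z, V (adjoint V z)⟫ ≤ ‖z‖ * ‖V (adjoint V z)‖ := real_inner_le_norm _ _
    rw [hVnorm] at h3
    have h4 : ‖adjoint V z‖^2 ≤ ‖z‖ * ‖adjoint V z‖ := by rw [h1, h2]; exact h3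
    have h5 : 0 < ‖adjoint V z‖ := norm_pos_iff.2 h0
    nlinarith
  -- quadratic form bound for Winv
  have hWinvb : ∀ w : K₀, ⟪Winv w, w⟫ ≤ mu⁻¹ * ‖w‖^2 := by
    intro w
    set z : K₀ := Winv w with hz
    have h1 : mu * ‖z‖^2 ≤ ⟪W z, z⟫ := by
      rw [hWapp, inner_add_left, real_inner_smul_left, real_inner_self_eq_norm_sq]
      have h2 : ⟪adjoint V (A (V z)), z⟫ = ⟪A (V z), V z⟫ := adjoint_inner_left V z (A (V z))
      have := hAnn (V z)
      linarith [h2 ▸ this]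
    rw [hW2'] at h1
    have h3 : ⟪w, z⟫ ≤ ‖w‖ * ‖z‖ := real_inner_le_norm _ _
    have h4 : ⟪Winv w, w⟫ = ⟪w, z⟫ := real_inner_comm _ _
    have h5 : ⟪z, w⟫ = ⟪w, z⟫ := real_inner_comm _ _
    rcases eq_or_ne z 0 with h0 | h0
    · rw [h4, ← h5, h0]; simp; positivity
    · have h6 : 0 < ‖z‖ := norm_pos_iff.2 h0
      have h7 : mu * ‖z‖^2 ≤ ‖w‖ * ‖z‖ := by linarith
      have h7' : mu * ‖z‖ ≤ ‖w‖ := by nlinarith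
      have h8 : ‖z‖ ≤ mu⁻¹ * ‖w‖ := by
        calc ‖z‖ = mu⁻¹ * (mu * ‖z‖) := by field_simp
          _ ≤ mu⁻¹ * ‖w‖ := mul_le_mul_of_nonneg_left h7' (by positivity)
      rw [h4]
      calc ⟪w, z⟫ ≤ ‖w‖ * ‖z‖ := h3
        _ ≤ ‖w‖ * (mu⁻¹ * ‖w‖) := by
            apply mul_le_mul_of_nonneg_left h8 (norm_nonneg _)
        _ = mu⁻¹ * ‖w‖^2 := by ring
  -- quadratic form bound for h
  have hhb : ∀ z : H, ⟪h z, z⟫ ≤ mu⁻¹ * ‖z‖^2 := by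
    intro z
    have h1 : ⟪h z, z⟫ = ⟪Winv (adjoint V z), adjoint V z⟫ := by
      rw [hhapp]
      exact (adjoint_inner_right V (Winv (adjoint V z)) z).symm
    rw [h1]
    calc ⟪Winv (adjoint V z), adjoint V z⟫ ≤ mu⁻¹ * ‖adjoint V z‖^2 := hWinvb _
      _ ≤ mu⁻¹ * ‖z‖^2 := by
          apply mul_le_mul_of_nonneg_left _ (by positivity)
          have := hVadnorm z
          nlinarith [norm_nonneg (adjoint V z)]
  -- symmetry of p t
  have hpsym : ∀ t, 0 ≤ t → ∀ x y : H, ⟪p t x, y⟫ = ⟪x, p t y⟫ :=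
    fun t ht => fun x y => (hpos t ht).1 x y
  ---------------------------------------------------------------------------
  -- KEY LEMMA: ⟪p t y, y⟫ ≤ mu^(t-1) * ⟪p 1 y, y⟫ for t ∈ [0,1]
  ---------------------------------------------------------------------------
  have key : ∀ t, t ∈ Set.Icc (0:ℝ) 1 → ∀ y : H,
      ⟪p t y, y⟫ ≤ mu ^ (t - 1) * ⟪p 1 y, y⟫ := by
    intro t ht y
    by_cases hy : y = 0
    · simp [hy]
    set f : ℝ → ℝ := fun s => ⟪p s y, y⟫ with hf
    have hf_nonneg : ∀ s, 0 ≤ s → 0 ≤ f s := fun s hs => by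
      simpa using (hpos s hs).inner_nonneg_left y
    have hf_sq : ∀ s, 0 ≤ s → f s = ‖p (s/2) y‖^2 := by
      intro s hs
      have h2 : s/2 + s/2 = s := by ring
      have h3 : p (s/2 + s/2) = p (s/2) ∘L p (s/2) := hsg _ _ (by linarith) (by linarith)
      rw [h2] at h3
      calc f s = ⟪p (s/2) (p (s/2) y), y⟫ := by rw [hf]; simp only [h3, comp_apply]
        _ = ⟪p (s/2) y, p (s/2) y⟫ := hpsym (s/2) (by linarith) _ _
        _ = ‖p (s/2) y‖^2 := real_inner_self_eq_norm_sq _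
    have hmidf : ∀ a, 0 ≤ a → ∀ b, 0 ≤ b → f ((a+b)/2)^2 ≤ f a * f b := by
      intro a ha b hb
      have h2 : (a+b)/2 = a/2 + b/2 := by ring
      have h3 : p ((a+b)/2) = p (a/2) ∘L p (b/2) := by
        rw [h2]; exact hsg _ _ (by linarith) (by linarith)
      have h4 : f ((a+b)/2) = ⟪p (b/2) y, p (a/2) y⟫ := by
        rw [hf]
        simp only [h3, comp_apply]
        exact hpsym (a/2) (by linarith) _ _
      have h5 : f ((a+b)/2) ≤ ‖p (b/2) y‖ * ‖p (a/2) y‖ := h4 ▸ real_inner_le_norm _ _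
      have h6 : f ((a+b)/2)^2 ≤ (‖p (b/2) y‖ * ‖p (a/2) y‖)^2 := by
        have hnn := hf_nonneg _ (by linarith : (0:ℝ) ≤ (a+b)/2)
        nlinarith [norm_nonneg (p (b/2) y), norm_nonneg (p (a/2) y)]
      calc f ((a+b)/2)^2 ≤ (‖p (b/2) y‖ * ‖p (a/2) y‖)^2 := h6
        _ = ‖p (a/2) y‖^2 * ‖p (b/2) y‖^2 := by ring
        _ = f a * f b := by rw [← hf_sq a ha, ← hf_sq b hb]
    have hf0 : f 0 = ⟪y, y⟫ := by rw [hf]; simp [hp0]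
    have hf1_lb : mu * f 0 ≤ f 1 := by
      have h1 : f 1 = ⟪A y, y⟫ + mu * ⟪y, y⟫ := by
        rw [hf]; simp only [hp1app, inner_add_left, real_inner_smul_left]
      rw [hf0, h1]
      linarith [hAnn y]
    have hf0_pos : 0 < f 0 := by
      rw [hf0, real_inner_self_eq_norm_sq]
      exact pow_pos (norm_pos_iff.2 hy) 2
    have hf1_pos : 0 < f 1 := lt_of_lt_of_le (mul_pos hmu hf0_pos) hf1_lb
    have hf_pos : ∀ s ∈ Set.Icc (0:ℝ) 1, 0 < f s := by
      intro s hs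
      rcases (hf_nonneg s hs.1).lt_or_eq with hlt | heq
      · exact hlt
      exfalso
      have hz : p (s/2) y = 0 := by
        have h1 := hf_sq s hs.1
        rw [← heq] at h1
        have : ‖p (s/2) y‖ = 0 := by nlinarith [norm_nonneg (p (s/2) y)]
        exact norm_eq_zero.1 this
      have h2 : (1 - s/2) + s/2 = 1 := by ring
      have h3 : p 1 y = 0 := by
        calc p 1 y = p ((1 - s/2) + s/2) y := by rw [h2]
          _ = p (1 - s/2) (p (s/2) y) := by
              rw [hsg _ _ (by linarith [hs.2]) (by linarith [hs.1])]; rfl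
          _ = 0 := by rw [hz]; simp
      have : f 1 = 0 := by rw [hf]; simp [h3]
      linarith
    have hfc : ContinuousOn f (Set.Icc 0 1) := by
      have h1 : ContinuousOn (fun s => p s y) (Set.Icc (0:ℝ) 1) := by
        exact (ContinuousLinearMap.apply ℝ H y).continuous.comp_continuousOn
          (hcont.mono (fun s hs => hs.1))
      exact h1.inner continuousOn_const
    set g : ℝ → ℝ := fun s => Real.log (f s) with hg
    have hgc : ContinuousOn g (Set.Icc 0 1) :=
      hfc.log (fun s hs => (hf_pos s hs).ne')
    have hgm : ∀ a ∈ Set.Icc (0:ℝ) 1, ∀ b ∈ Set.Icc (0:ℝ) 1,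
        g ((a+b)/2) ≤ (g a + g b)/2 := by
      intro a ha b hb
      have hm : (a+b)/2 ∈ Set.Icc (0:ℝ) 1 := ⟨by linarith [ha.1, hb.1], by linarith [ha.2, hb.2]⟩
      have h1 := hmidf a ha.1 b hb.1
      have h2 : Real.log (f ((a+b)/2)^2) ≤ Real.log (f a * f b) :=
        Real.log_le_log (pow_pos (hf_pos _ hm) 2) h1
      rw [Real.log_pow, Real.log_mul (hf_pos a ha).ne' (hf_pos b hb).ne'] at h2
      simp only [hg]
      push_cast at h2
      linarith
    have hgt := aux_midpoint_chord hgc hgm ht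
    have hft : f t ≤ f 0 ^ (1-t) * f 1 ^ t := by
      calc f t = Real.exp (g t) := (Real.exp_log (hf_pos t ht)).symm
        _ ≤ Real.exp ((1-t) * g 0 + t * g 1) := Real.exp_le_exp.2 hgt
        _ = f 0 ^ (1-t) * f 1 ^ t := by
            rw [Real.rpow_def_of_pos hf0_pos, Real.rpow_def_of_pos hf1_pos, ← Real.exp_add]
            ring_nf
            simp only [hg]
    have hf0_le : f 0 ≤ mu⁻¹ * f 1 := by
      rw [inv_mul_eq_div, le_div_iff₀ hmu]
      linarith [mul_comm mu (f 0)]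
    have hfinal : f t ≤ mu ^ (t-1) * f 1 := by
      calc f t ≤ f 0 ^ (1-t) * f 1 ^ t := hft
        _ ≤ (mu⁻¹ * f 1) ^ (1-t) * f 1 ^ t := by
            apply mul_le_mul_of_nonneg_right _ (Real.rpow_nonneg hf1_pos.le t)
            exact Real.rpow_le_rpow hf0_pos.le hf0_le (by linarith [ht.2])
        _ = mu ^ (t-1) * f 1 := by
            rw [Real.mul_rpow (by positivity) hf1_pos.le, Real.inv_rpow hmu.le,
              ← Real.rpow_neg hmu.le, mul_assoc, ← Real.rpow_add hf1_pos]
            rw [show (1-t) + t = 1 by ring, Real.rpow_one, show -(1-t) = t-1 by ring]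
    exact hfinal
  ---------------------------------------------------------------------------
  -- Main estimate
  ---------------------------------------------------------------------------
  have hmu_pos : ∀ c : ℝ, 0 < mu ^ c := fun c => Real.rpow_pos_of_pos hmu c
  -- z x := h (p v x)
  have lemA : ∀ a, 0 ≤ a → a ≤ 1/2 → ∀ x : H,
      ‖p a (h (p v x))‖^2 ≤ mu ^ (a + a - 1) * ⟪h (p v x), p v x⟫ := by
    intro a ha0 ha x
    set z : H := h (p v x) with hzdef
    have h1 : ‖p a z‖^2 = ⟪p (a+a) z, z⟫ := by
      rw [← real_inner_self_eq_norm_sq]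
      rw [hpsym a ha0, real_inner_comm]
      congr 1
      rw [hsg a a ha0 ha0]; rfl
    have h2 : ⟪p (a+a) z, z⟫ ≤ mu ^ ((a+a) - 1) * ⟪p 1 z, z⟫ :=
      key (a+a) ⟨by linarith, by linarith⟩ z
    have h3 : ⟪p 1 z, z⟫ = ⟪z, p v x⟫ := by
      calc ⟪p 1 z, z⟫ = ⟪p 1 z, h (p v x)⟫ := rfl
        _ = ⟪h (p 1 z), p v x⟫ := (hhsym (p 1 z) (p v x)).symm
        _ = ⟪h (p 1 (h (p v x))), p v x⟫ := rfl
        _ = ⟪h (p v x), p v x⟫ := by rw [hhBh]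
        _ = ⟪z, p v x⟫ := rfl
    rw [h1]
    calc ⟪p (a+a) z, z⟫ ≤ mu ^ ((a+a) - 1) * ⟪p 1 z, z⟫ := h2
      _ = mu ^ (a + a - 1) * ⟪z, p v x⟫ := by rw [h3]
  have lemB : ∀ x : H, ⟪h (p v x), p v x⟫ ≤ mu ^ (v + v - 1) * ‖x‖^2 := by
    intro x
    set z : H := h (p v x) with hzdef
    set c : ℝ := ⟪z, p v x⟫ with hcdef
    set s : ℝ := ‖p v z‖ with hsdef
    have hc2 : c = ⟪p v z, x⟫ := by
      rw [hcdef, real_inner_comm, hpsym v hv0, real_inner_comm]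
    have h1 : s^2 ≤ mu ^ (v + v - 1) * c := lemA v hv0 hv x
    have h2 : c ≤ s * ‖x‖ := by rw [hc2]; exact real_inner_le_norm _ _
    show c ≤ mu ^ (v + v - 1) * ‖x‖^2
    rcases le_or_gt c 0 with hc0 | hc0
    · calc c ≤ 0 := hc0
        _ ≤ mu ^ (v + v - 1) * ‖x‖^2 := by positivity
    · have hsnn : (0:ℝ) ≤ s := norm_nonneg _
      have hs0 : 0 < s := by nlinarith [h2, hc0, norm_nonneg x]
      have h2' : mu ^ (v + v - 1) * c ≤ mu ^ (v + v - 1) * (s * ‖x‖) :=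
        mul_le_mul_of_nonneg_left h2 (hmu_pos (v+v-1)).le
      have h3 : s ≤ mu ^ (v + v - 1) * ‖x‖ := by nlinarith [h1, h2', hs0]
      calc c ≤ s * ‖x‖ := h2
        _ ≤ (mu ^ (v + v - 1) * ‖x‖) * ‖x‖ :=
            mul_le_mul_of_nonneg_right h3 (norm_nonneg _)
        _ = mu ^ (v + v - 1) * ‖x‖^2 := by ring
  -- combine
  have hbound : ∀ x : H, ‖(p u ∘L (V ∘L Winv ∘L (adjoint V)) ∘L p v) x‖ ≤
      mu ^ (-1 + u + v) * ‖x‖ := by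
    intro x
    have happ : (p u ∘L (V ∘L Winv ∘L (adjoint V)) ∘L p v) x = p u (h (p v x)) := by
      simp [hhdef, comp_apply]
    rw [happ]
    have h1 : ‖p u (h (p v x))‖^2 ≤ mu ^ (u + u - 1) * ⟪h (p v x), p v x⟫ :=
      lemA u hu0 hu x
    have h2 := lemB x
    have h3 : ‖p u (h (p v x))‖^2 ≤ mu ^ (u + u - 1) * (mu ^ (v + v - 1) * ‖x‖^2) := by
      calc ‖p u (h (p v x))‖^2 ≤ mu ^ (u + u - 1) * ⟪h (p v x), p v x⟫ := h1
        _ ≤ mu ^ (u + u - 1) * (mu ^ (v + v - 1) * ‖x‖^2) :=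
            mul_le_mul_of_nonneg_left h2 (hmu_pos _).le
    have h4 : mu ^ (u + u - 1) * (mu ^ (v + v - 1)) = (mu ^ (-1 + u + v))^2 := by
      rw [← Real.rpow_add hmu, ← Real.rpow_natCast (mu ^ (-1 + u + v)) 2,
        ← Real.rpow_mul hmu.le]
      norm_num
      ring_nf
    have h5 : ‖p u (h (p v x))‖^2 ≤ (mu ^ (-1 + u + v) * ‖x‖)^2 := by
      calc ‖p u (h (p v x))‖^2 ≤ mu ^ (u + u - 1) * (mu ^ (v + v - 1) * ‖x‖^2) := h3
        _ = (mu ^ (-1 + u + v))^2 * ‖x‖^2 := by rw [← mul_assoc, h4]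
        _ = (mu ^ (-1 + u + v) * ‖x‖)^2 := by ring
    exact (pow_le_pow_iff_left₀ (norm_nonneg _) (by positivity) two_ne_zero).1 h5
  exact ContinuousLinearMap.opNorm_le_bound _ (hmu_pos _).le hbound
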